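/- Let u be a vertex of graph G with core_G(u) = k and superior degree SD(u) ≤ k, and suppose an edge incident to u that is a superior edge for u is deleted (as part of a deleted edge set). Then the core number of u strictly decreases, i.e., core_{G'}(u) < k where G' is the resulting graph. -/

import Mathlib

open SimpleGraph

/-- The core number of a vertex: the largest `k` such that the vertex lies in a
subgraph of `G` with minimum degree at least `k`. -/
noncomputable def coreNumber {V : Type*} (G : SimpleGraph V) (v : V) : ℕ :=
  sSup {k : ℕ | ∃ H : G.Subgraph, v ∈ H.verts ∧ ∀ w ∈ H.verts, k ≤ (H.neighborSet w).ncard}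

/-- The superior degree of `u`: the number of neighbors `v` with `coreNumber G v ≥ coreNumber G u`. -/
noncomputable def SD {V : Type*} (G : SimpleGraph V) (u : V) : ℕ :=
  {v : V | G.Adj u v ∧ coreNumber G u ≤ coreNumber G v}.ncard

lemma coreSet_nonempty {V : Type*} (G : SimpleGraph V) (v : V) :
    Set.Nonempty {k : ℕ | ∃ H : G.Subgraph, v ∈ H.verts ∧
      ∀ w ∈ H.verts, k ≤ (H.neighborSet w).ncard} :=
  ⟨0, ⊤, Set.mem_univ v, fun _ _ => Nat.zero_le _⟩

lemma coreSet_bdd {V : Type*} [Fintype V] (G : SimpleGraph V) (v : V) :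
    BddAbove {k : ℕ | ∃ H : G.Subgraph, v ∈ H.verts ∧
      ∀ w ∈ H.verts, k ≤ (H.neighborSet w).ncard} := by
  refine ⟨Fintype.card V, ?_⟩
  rintro k ⟨H, hv, hk⟩
  calc k ≤ (H.neighborSet v).ncard := hk v hv
    _ ≤ (Set.univ : Set V).ncard := Set.ncard_le_ncard (Set.subset_univ _) Set.finite_univ
    _ = Fintype.card V := by rw [Set.ncard_univ, Nat.card_eq_fintype_card]

theorem sd_le_core_decreases_on_superior_delete {V : Type*} [Fintype V] (G : SimpleGraph V)
    (S : Set (Sym2 V)) (hSE : S ⊆ G.edgeSet)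
    (u : V) (k : ℕ) (hu : coreNumber G u = k) (hsd : SD G u ≤ k)
    (hdel : ∃ e ∈ S, ∃ v : V, e = s(u,v) ∧ coreNumber G u ≤ coreNumber G v) :
    coreNumber (G.deleteEdges S) u < k := by
  by_contra hlt
  push_neg at hlt
  obtain ⟨e, heS, v, rfl, hv⟩ := hdel
  have hadj : G.Adj u v := G.mem_edgeSet.mp (hSE heS)
  have hmem : coreNumber (G.deleteEdges S) u ∈
      {k : ℕ | ∃ H : (G.deleteEdges S).Subgraph, u ∈ H.verts ∧
        ∀ w ∈ H.verts, k ≤ (H.neighborSet w).ncard} :=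
    Nat.sSup_mem (coreSet_nonempty _ u) (coreSet_bdd _ u)
  obtain ⟨H, huH, hHdeg⟩ := hmem
  let H' : G.Subgraph :=
    { verts := H.verts
      Adj := H.Adj
      adj_sub := fun h => (SimpleGraph.deleteEdges_le S) (H.adj_sub h)
      edge_vert := H.edge_vert
      symm := H.symm }
  have hdegk : ∀ w ∈ H.verts, k ≤ (H.neighborSet w).ncard :=
    fun w hw => hlt.trans (hHdeg w hw)
  have hsubset : insert v (H.neighborSet u) ⊆
      {w : V | G.Adj u w ∧ coreNumber G u ≤ coreNumber G w} := by
    intro w hw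
    rcases Set.mem_insert_iff.mp hw with rfl | hw
    · exact ⟨hadj, hv⟩
    · have hwv : w ∈ H.verts := H.edge_vert (H.adj_symm hw)
      refine ⟨H'.adj_sub hw, ?_⟩
      rw [hu]
      exact le_csSup (coreSet_bdd G w) ⟨H', hwv, hdegk⟩
  have hvnot : v ∉ H.neighborSet u := by
    intro hv'
    have h2 := H.adj_sub hv'
    rw [SimpleGraph.deleteEdges_adj] at h2
    exact h2.2 heS
  have hcard : k + 1 ≤ SD G u := by
    have h1 : k + 1 ≤ (insert v (H.neighborSet u)).ncard := by
      rw [Set.ncard_insert_of_notMem hvnot (Set.toFinite _)]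
      exact Nat.add_le_add_right (hdegk u huH) 1
    exact h1.trans (Set.ncard_le_ncard hsubset (Set.toFinite _))
  omega
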